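/- Let (Ω, F, P) be a probability space, ρ ∈ (0,1), α > 0. Let v_t : Ω → ℝ (t ∈ ℕ₀) be nonnegative random variables and let k_n : Ω → ℕ₀ (n ∈ ℕ₀) be random variables such that almost surely (k_n) is strictly increasing with k_0 = 0 and (v_t) is a cycle-Lyapunov sequence for (ρ, α, (k_n)). Suppose v_0 is independent of the σ-algebra generated by (Δ_n)_{n≥1} and E[v_0] < ∞. If there exist μ > 0, K ∈ ℕ and q ∈ (0,1) such that E[Ξ(n)] ≤ μ · q^{n−1} for all n > K, and E[Ξ(n)] < ∞ for all n ≤ K, then Σ_{t=0}^{∞} E[v_t] < ∞. -/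

import Mathlib

open MeasureTheory
open scoped ENNReal

/-- `v : ℕ → ℝ` is a cycle-Lyapunov sequence for `(ρ, α, k)`: it is nonnegative, satisfies
`v (k n + 1) ≤ α * v (k n)` at the start of each cycle, and contracts by `ρ` at every step
`t` with `k n + 1 ≤ t ≤ k (n+1) - 1` within a cycle. -/
def IsCycleLyapunov (ρ α : ℝ) (k : ℕ → ℕ) (v : ℕ → ℝ) : Prop :=
  (∀ t, 0 ≤ v t) ∧
  (∀ n, v (k n + 1) ≤ α * v (k n)) ∧
  (∀ n t, k n + 1 ≤ t → t < k (n + 1) → v (t + 1) ≤ ρ * v t)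

/-- `Ξ(n) = α^n · ρ^{Σ_{i=1}^{n} (Δ_i − 1)}` where `Δ_i = k i − k (i−1)`; in particular
`Ξ(0) = 1` (empty sum). -/
noncomputable def Xi (ρ α : ℝ) (k : ℕ → ℕ) (n : ℕ) : ℝ :=
  α ^ n * ρ ^ (∑ i ∈ Finset.range n, (k (i + 1) - k i - 1))

section Deterministic

variable {ρ α : ℝ} {k : ℕ → ℕ} {v : ℕ → ℝ}

lemma Xi_nonneg (hρ : 0 < ρ) (hα : 0 < α) (n : ℕ) : 0 ≤ Xi ρ α k n := by
  unfold Xi; positivity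

lemma Xi_succ (n : ℕ) :
    Xi ρ α k (n + 1) = Xi ρ α k n * (α * ρ ^ (k (n + 1) - k n - 1)) := by
  unfold Xi
  rw [Finset.sum_range_succ, pow_succ, pow_add]
  ring

/-- within a cycle: `v (k n + 1 + j) ≤ α ρ^j v (k n)`. -/
lemma cycle_step (hρ : 0 < ρ) (hα : 0 < α)
    (hL : IsCycleLyapunov ρ α k v) :
    ∀ n j, k n + 1 + j ≤ k (n + 1) → v (k n + 1 + j) ≤ α * ρ ^ j * v (k n) := by
  intro n j
  induction j with
  | zero => intro _; simpa using hL.2.1 n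
  | succ j ih =>
    intro hle
    have h1 : k n + 1 + j ≤ k (n + 1) := by omega
    have h2 : k n + 1 + j < k (n + 1) := by omega
    have hstep := hL.2.2 n (k n + 1 + j) (by omega) h2
    have hprev := ih h1
    have : v (k n + 1 + j + 1) ≤ ρ * (α * ρ ^ j * v (k n)) := by
      refine hstep.trans ?_
      exact mul_le_mul_of_nonneg_left hprev hρ.le
    have heq : k n + 1 + (j + 1) = k n + 1 + j + 1 := by omega
    rw [heq]
    calc v (k n + 1 + j + 1) ≤ ρ * (α * ρ ^ j * v (k n)) := this
      _ = α * ρ ^ (j + 1) * v (k n) := by ring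

lemma cycle_end (hρ : 0 < ρ) (hα : 0 < α) (hk : StrictMono k)
    (hL : IsCycleLyapunov ρ α k v) (n : ℕ) :
    v (k (n + 1)) ≤ α * ρ ^ (k (n + 1) - k n - 1) * v (k n) := by
  have hlt : k n < k (n + 1) := hk (Nat.lt_succ_self n)
  have heq : k n + 1 + (k (n + 1) - k n - 1) = k (n + 1) := by omega
  have := cycle_step hρ hα hL n (k (n + 1) - k n - 1) (by omega)
  rwa [heq] at this

lemma v_k_le (hρ : 0 < ρ) (hα : 0 < α) (hk : StrictMono k) (hk0 : k 0 = 0)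
    (hL : IsCycleLyapunov ρ α k v) (n : ℕ) :
    v (k n) ≤ Xi ρ α k n * v 0 := by
  induction n with
  | zero => simp [Xi, hk0]
  | succ n ih =>
    have h1 := cycle_end hρ hα hk hL n
    have h2 : α * ρ ^ (k (n + 1) - k n - 1) * v (k n)
        ≤ α * ρ ^ (k (n + 1) - k n - 1) * (Xi ρ α k n * v 0) := by
      refine mul_le_mul_of_nonneg_left ih (by positivity)
    rw [Xi_succ]
    calc v (k (n + 1)) ≤ α * ρ ^ (k (n + 1) - k n - 1) * (Xi ρ α k n * v 0) :=
          h1.trans h2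
      _ = Xi ρ α k n * (α * ρ ^ (k (n + 1) - k n - 1)) * v 0 := by ring

lemma geom_sum_bound (hρ : 0 < ρ) (hρ1 : ρ < 1) (D : ℕ) :
    ∑ j ∈ Finset.range D, ρ ^ j ≤ (1 - ρ)⁻¹ := by
  have h1 : ρ ≠ 1 := ne_of_lt hρ1
  rw [geom_sum_eq h1]
  rw [div_le_iff_of_neg (by linarith : ρ - 1 < 0)]
  have hρD : 0 ≤ ρ ^ D := by positivity
  have h2 : (0:ℝ) < (1 - ρ)⁻¹ := inv_pos.mpr (by linarith)
  have : (1 - ρ)⁻¹ * (1 - ρ) = 1 := inv_mul_cancel₀ (by linarith)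
  nlinarith

lemma cycle_sum_le (hρ : 0 < ρ) (hρ1 : ρ < 1) (hα : 0 < α)
    (hk : StrictMono k) (hk0 : k 0 = 0) (hL : IsCycleLyapunov ρ α k v) (n : ℕ) :
    ∑ t ∈ Finset.Ico (k n + 1) (k (n + 1) + 1), v t
      ≤ α / (1 - ρ) * (Xi ρ α k n * v 0) := by
  have hlt : k n < k (n + 1) := hk (Nat.lt_succ_self n)
  rw [Finset.sum_Ico_eq_sum_range]
  have hterm : ∀ j ∈ Finset.range (k (n + 1) + 1 - (k n + 1)),
      v (k n + 1 + j) ≤ α * ρ ^ j * v (k n) := by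
    intro j hj
    rw [Finset.mem_range] at hj
    exact cycle_step hρ hα hL n j (by omega)
  calc ∑ j ∈ Finset.range (k (n + 1) + 1 - (k n + 1)), v (k n + 1 + j)
      ≤ ∑ j ∈ Finset.range (k (n + 1) + 1 - (k n + 1)), α * ρ ^ j * v (k n) :=
        Finset.sum_le_sum hterm
    _ = (α * v (k n)) * ∑ j ∈ Finset.range (k (n + 1) + 1 - (k n + 1)), ρ ^ j := by
        rw [Finset.mul_sum]; apply Finset.sum_congr rfl; intro j _; ring
    _ ≤ (α * v (k n)) * (1 - ρ)⁻¹ := by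
        refine mul_le_mul_of_nonneg_left (geom_sum_bound hρ hρ1 _) ?_
        exact mul_nonneg hα.le (hL.1 _)
    _ ≤ (α * (Xi ρ α k n * v 0)) * (1 - ρ)⁻¹ := by
        refine mul_le_mul_of_nonneg_right ?_ (le_of_lt (inv_pos.mpr (by linarith)))
        exact mul_le_mul_of_nonneg_left (v_k_le hρ hα hk hk0 hL n) hα.le
    _ = α / (1 - ρ) * (Xi ρ α k n * v 0) := by
        rw [div_eq_mul_inv]; ring

lemma partial_sum_le (hρ : 0 < ρ) (hρ1 : ρ < 1) (hα : 0 < α)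
    (hk : StrictMono k) (hk0 : k 0 = 0) (hL : IsCycleLyapunov ρ α k v) (N : ℕ) :
    ∑ t ∈ Finset.range (k N + 1), v t
      ≤ v 0 + α / (1 - ρ) * ∑ n ∈ Finset.range N, (Xi ρ α k n * v 0) := by
  induction N with
  | zero => simp [hk0]
  | succ N ih =>
    have hmono : k N + 1 ≤ k (N + 1) + 1 := by
      have := hk (show N < N + 1 by omega); omega
    have hsplit : ∑ t ∈ Finset.range (k (N + 1) + 1), v t
        = ∑ t ∈ Finset.range (k N + 1), v t
          + ∑ t ∈ Finset.Ico (k N + 1) (k (N + 1) + 1), v t := by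
      rw [Finset.range_eq_Ico, Finset.range_eq_Ico]
      exact (Finset.sum_Ico_consecutive v (Nat.zero_le _) hmono).symm
    rw [hsplit, Finset.sum_range_succ (fun n => Xi ρ α k n * v 0) N]
    have h2 := cycle_sum_le hρ hρ1 hα hk hk0 hL N
    have hdiv : 0 ≤ α / (1 - ρ) := div_nonneg hα.le (by linarith)
    calc ∑ t ∈ Finset.range (k N + 1), v t
          + ∑ t ∈ Finset.Ico (k N + 1) (k (N + 1) + 1), v t
        ≤ (v 0 + α / (1 - ρ) * ∑ n ∈ Finset.range N, (Xi ρ α k n * v 0))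
          + α / (1 - ρ) * (Xi ρ α k N * v 0) := add_le_add ih h2
      _ = v 0 + α / (1 - ρ)
            * (∑ n ∈ Finset.range N, (Xi ρ α k n * v 0) + Xi ρ α k N * v 0) := by ring

/-- Pointwise (per-ω) bound on the full `tsum` in `ℝ≥0∞`. -/
lemma tsum_le_pointwise (hρ : 0 < ρ) (hρ1 : ρ < 1) (hα : 0 < α)
    (hk : StrictMono k) (hk0 : k 0 = 0) (hL : IsCycleLyapunov ρ α k v) :
    ∑' t, ENNReal.ofReal (v t)
      ≤ ENNReal.ofReal (v 0) + ENNReal.ofReal (α / (1 - ρ))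
          * ∑' n, (ENNReal.ofReal (v 0) * ENNReal.ofReal (Xi ρ α k n)) := by
  rw [ENNReal.tsum_eq_iSup_sum]
  refine iSup_le fun s => ?_
  set N := (s.sup id) + 1 with hN
  have hsub : s ⊆ Finset.range (k N + 1) := by
    intro i hi
    rw [Finset.mem_range]
    have h1 : i ≤ s.sup id := Finset.le_sup (f := id) hi
    have h2 : N ≤ k N := hk.le_apply
    omega
  have hstep1 : ∑ t ∈ s, ENNReal.ofReal (v t)
      ≤ ∑ t ∈ Finset.range (k N + 1), ENNReal.ofReal (v t) :=
    Finset.sum_le_sum_of_subset hsub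
  have hstep2 : ∑ t ∈ Finset.range (k N + 1), ENNReal.ofReal (v t)
      = ENNReal.ofReal (∑ t ∈ Finset.range (k N + 1), v t) :=
    (ENNReal.ofReal_sum_of_nonneg fun i _ => hL.1 i).symm
  have hstep3 : ENNReal.ofReal (∑ t ∈ Finset.range (k N + 1), v t)
      ≤ ENNReal.ofReal (v 0 + α / (1 - ρ) * ∑ n ∈ Finset.range N, (Xi ρ α k n * v 0)) :=
    ENNReal.ofReal_le_ofReal (partial_sum_le hρ hρ1 hα hk hk0 hL N)
  refine hstep1.trans (hstep2 ▸ hstep3.trans ?_)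
  have hsum_nonneg : 0 ≤ ∑ n ∈ Finset.range N, (Xi ρ α k n * v 0) :=
    Finset.sum_nonneg fun n _ => mul_nonneg (Xi_nonneg hρ hα n) (hL.1 0)
  have hdiv : (0:ℝ) ≤ α / (1 - ρ) := div_nonneg hα.le (by linarith)
  rw [ENNReal.ofReal_add (hL.1 0) (mul_nonneg hdiv hsum_nonneg),
    ENNReal.ofReal_mul hdiv]
  gcongr
  rw [ENNReal.ofReal_sum_of_nonneg
    (fun n _ => mul_nonneg (Xi_nonneg hρ hα n) (hL.1 0))]
  refine le_trans (le_of_eq ?_) (ENNReal.sum_le_tsum (Finset.range N))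
  refine Finset.sum_congr rfl fun n _ => ?_
  rw [ENNReal.ofReal_mul (Xi_nonneg hρ hα n), mul_comm]

end Deterministic

theorem stability_from_eventually_geometric
    {Ω : Type*} [MeasurableSpace Ω] (P : Measure Ω) [IsProbabilityMeasure P]
    (ρ α : ℝ) (hρ : ρ ∈ Set.Ioo (0 : ℝ) 1) (hα : 0 < α)
    (v : ℕ → Ω → ℝ) (k : ℕ → Ω → ℕ)
    (hvmeas : ∀ t, Measurable (v t)) (hkmeas : ∀ n, Measurable (k n))
    (hvnn : ∀ t ω, 0 ≤ v t ω)
    (hae : ∀ᵐ ω ∂P, StrictMono (fun n => k n ω) ∧ k 0 ω = 0 ∧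
      IsCycleLyapunov ρ α (fun n => k n ω) (fun t => v t ω))
    (hindep : ProbabilityTheory.Indep
      (MeasurableSpace.comap (v 0) inferInstance)
      (⨆ n : ℕ, MeasurableSpace.comap (fun ω => k (n + 1) ω - k n ω) inferInstance) P)
    (hv0 : (∫⁻ ω, ENNReal.ofReal (v 0 ω) ∂P) < ⊤)
    (μ : ℝ) (hμ : 0 < μ) (K : ℕ) (q : ℝ) (hq : q ∈ Set.Ioo (0 : ℝ) 1)
    (hgeom : ∀ n : ℕ, K < n →
      (∫⁻ ω, ENNReal.ofReal (Xi ρ α (fun m => k m ω) n) ∂P) ≤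
        ENNReal.ofReal (μ * q ^ (n - 1)))
    (hfin : ∀ n : ℕ, n ≤ K →
      (∫⁻ ω, ENNReal.ofReal (Xi ρ α (fun m => k m ω) n) ∂P) < ⊤) :
    (∑' t : ℕ, ∫⁻ ω, ENNReal.ofReal (v t ω) ∂P) < ⊤ := by
  obtain ⟨hρ0, hρ1⟩ := hρ
  obtain ⟨hq0, hq1⟩ := hq
  set D : ℕ → Ω → ℝ≥0∞ := fun n ω => ENNReal.ofReal (Xi ρ α (fun m => k m ω) n) with hD
  set V : ℕ → Ω → ℝ≥0∞ := fun t ω => ENNReal.ofReal (v t ω) with hV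
  have hMgle : (⨆ n : ℕ, MeasurableSpace.comap (fun ω => k (n + 1) ω - k n ω)
      inferInstance : MeasurableSpace Ω) ≤ ‹MeasurableSpace Ω› := by
    refine iSup_le fun n => ?_
    exact measurable_iff_comap_le.1 ((hkmeas (n + 1)).sub (hkmeas n))
  have hMfle : MeasurableSpace.comap (v 0) inferInstance ≤ ‹MeasurableSpace Ω› :=
    measurable_iff_comap_le.1 (hvmeas 0)
  have hDmeasMg : ∀ n, Measurable[⨆ n : ℕ, MeasurableSpace.comap
      (fun ω => k (n + 1) ω - k n ω) inferInstance] (D n) := by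
    intro n
    have hS : Measurable[⨆ n : ℕ, MeasurableSpace.comap
        (fun ω => k (n + 1) ω - k n ω) inferInstance]
        (fun ω => ∑ i ∈ Finset.range n, (k (i + 1) ω - k i ω - 1)) := by
      refine Finset.measurable_sum _ fun i _ => ?_
      have h1 : Measurable[⨆ n : ℕ, MeasurableSpace.comap
          (fun ω => k (n + 1) ω - k n ω) inferInstance]
          (fun ω => k (i + 1) ω - k i ω) :=
        Measurable.of_comap_le (le_iSup
          (fun m => MeasurableSpace.comap (fun ω => k (m + 1) ω - k m ω) inferInstance) i)
      exact (measurable_from_nat (f := fun m : ℕ => m - 1)).comp h1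
    have heq : D n = (fun s : ℕ => ENNReal.ofReal (α ^ n * ρ ^ s)) ∘
        (fun ω => ∑ i ∈ Finset.range n, (k (i + 1) ω - k i ω - 1)) := by
      funext ω; simp [hD, Xi]
    rw [heq]
    exact measurable_from_nat.comp hS
  have hDmeas : ∀ n, Measurable (D n) := fun n => (hDmeasMg n).mono hMgle le_rfl
  have hVmeas : ∀ t, Measurable (V t) :=
    fun t => ENNReal.measurable_ofReal.comp (hvmeas t)
  have hV0Mf : Measurable[MeasurableSpace.comap (v 0) inferInstance] (V 0) :=
    ENNReal.measurable_ofReal.comp (Measurable.of_comap_le le_rfl)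
  have hprod : ∀ n, (∫⁻ ω, V 0 ω * D n ω ∂P) = (∫⁻ ω, V 0 ω ∂P) * ∫⁻ ω, D n ω ∂P :=
    fun n =>
      ProbabilityTheory.lintegral_mul_eq_lintegral_mul_lintegral_of_independent_measurableSpace
        hMfle hMgle hindep hV0Mf (hDmeasMg n)
  set qe : ℝ≥0∞ := ENNReal.ofReal q with hqe
  have hqe0 : qe ≠ 0 := (ENNReal.ofReal_pos.mpr hq0).ne'
  have hqetop : qe ≠ ⊤ := ENNReal.ofReal_ne_top
  have hqelt1 : qe < 1 := ENNReal.ofReal_lt_one.mpr hq1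
  -- finiteness of ∑' n, ∫⁻ D n
  have hSfin : (∑' n, ∫⁻ ω, D n ω ∂P) < ⊤ := by
    have hsplit : (∑' n, ∫⁻ ω, D n ω ∂P)
        = (∑' n, if n ≤ K then ∫⁻ ω, D n ω ∂P else 0)
          + ∑' n, if n ≤ K then 0 else ∫⁻ ω, D n ω ∂P := by
      rw [← ENNReal.tsum_add]
      refine tsum_congr fun n => ?_
      by_cases h : n ≤ K <;> simp [h]
    rw [hsplit]
    have h1 : (∑' n, if n ≤ K then ∫⁻ ω, D n ω ∂P else 0) < ⊤ := by
      rw [tsum_eq_sum (s := Finset.range (K + 1))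
        (fun b hb => by
          rw [Finset.mem_range] at hb
          exact if_neg (by omega))]
      refine ENNReal.sum_lt_top.mpr fun n _ => ?_
      by_cases h : n ≤ K
      · simpa [h] using hfin n h
      · simp [h]
    have h2 : (∑' n, if n ≤ K then 0 else ∫⁻ ω, D n ω ∂P) < ⊤ := by
      have hbound : ∀ n, (if n ≤ K then 0 else ∫⁻ ω, D n ω ∂P)
          ≤ (ENNReal.ofReal μ * qe⁻¹) * qe ^ n := by
        intro n
        by_cases h : n ≤ K
        · simp [h]
        · push_neg at h
          simp only [if_neg (by omega : ¬ n ≤ K)]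
          refine (hgeom n h).trans ?_
          rw [ENNReal.ofReal_mul hμ.le, ENNReal.ofReal_pow hq0.le, ← hqe]
          have hn1 : n - 1 + 1 = n := by omega
          have hpow : qe ^ (n - 1) * qe = qe ^ n := by rw [← pow_succ, hn1]
          calc ENNReal.ofReal μ * qe ^ (n - 1)
              = ENNReal.ofReal μ * qe ^ (n - 1) * (qe⁻¹ * qe) := by
                rw [ENNReal.inv_mul_cancel hqe0 hqetop, mul_one]
            _ = (ENNReal.ofReal μ * qe⁻¹) * (qe ^ (n - 1) * qe) := by ring
            _ = (ENNReal.ofReal μ * qe⁻¹) * qe ^ n := by rw [hpow]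
            _ ≤ (ENNReal.ofReal μ * qe⁻¹) * qe ^ n := le_rfl
      refine lt_of_le_of_lt (ENNReal.tsum_le_tsum hbound) ?_
      rw [ENNReal.tsum_mul_left, ENNReal.tsum_geometric]
      refine ENNReal.mul_lt_top ?_ ?_
      · exact ENNReal.mul_lt_top ENNReal.ofReal_lt_top
          (ENNReal.inv_lt_top.mpr (zero_lt_iff.mpr hqe0))
      · rw [ENNReal.inv_lt_top]
        exact tsub_pos_of_lt hqelt1
    exact ENNReal.add_lt_top.mpr ⟨h1, h2⟩
  -- pointwise a.e. bound
  set c : ℝ≥0∞ := ENNReal.ofReal (α / (1 - ρ)) with hc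
  have haebound : ∀ᵐ ω ∂P, (∑' t, V t ω) ≤ V 0 ω + c * ∑' n, (V 0 ω * D n ω) := by
    filter_upwards [hae] with ω hω
    exact tsum_le_pointwise hρ0 hρ1 hα hω.1 hω.2.1 hω.2.2
  have hswap : (∑' t : ℕ, ∫⁻ ω, ENNReal.ofReal (v t ω) ∂P)
      = ∫⁻ ω, ∑' t, V t ω ∂P :=
    (lintegral_tsum fun t => (hVmeas t).aemeasurable).symm
  rw [hswap]
  have htsum_meas : Measurable (fun ω => ∑' n, (V 0 ω * D n ω)) :=
    Measurable.ennreal_tsum fun n => (hVmeas 0).mul (hDmeas n)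
  calc ∫⁻ ω, ∑' t, V t ω ∂P
      ≤ ∫⁻ ω, (V 0 ω + c * ∑' n, (V 0 ω * D n ω)) ∂P := lintegral_mono_ae haebound
    _ = (∫⁻ ω, V 0 ω ∂P) + c * ∫⁻ ω, ∑' n, (V 0 ω * D n ω) ∂P := by
        rw [lintegral_add_left (hVmeas 0), lintegral_const_mul c htsum_meas]
    _ = (∫⁻ ω, V 0 ω ∂P) + c * ∑' n, ∫⁻ ω, (V 0 ω * D n ω) ∂P := by
        rw [lintegral_tsum (f := fun n ω => V 0 ω * D n ω) fun n => ((hVmeas 0).mul (hDmeas n)).aemeasurable]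
    _ = (∫⁻ ω, V 0 ω ∂P) + c * ∑' n, ((∫⁻ ω, V 0 ω ∂P) * ∫⁻ ω, D n ω ∂P) := by
        congr 2; exact tsum_congr fun n => hprod n
    _ = (∫⁻ ω, V 0 ω ∂P) + c * ((∫⁻ ω, V 0 ω ∂P) * ∑' n, ∫⁻ ω, D n ω ∂P) := by
        rw [ENNReal.tsum_mul_left]
    _ < ⊤ := by
        refine ENNReal.add_lt_top.mpr ⟨hv0, ?_⟩
        exact ENNReal.mul_lt_top ENNReal.ofReal_lt_top (ENNReal.mul_lt_top hv0 hSfin)
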